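/- Let n be a natural number, let η be the diagonal 4×4 matrix diag(1, −1, −1, −1), and let d : Fin n → Fin n → Fin n → ℝ be symmetric under exchange of its last two indices (d a b c = d a c b). Let A¹, A², A³ : ℝ⁴ → (Fin n → Fin 4 → ℝ) be smooth maps such that A¹ is η-divergence-free: for every a and x, ∑_{μ,ρ} η^{μρ} ∂_ρ A¹_{μ a}(x) = 0. Define Q_μ(x) := ∑_{a,b,c} d_{abc} A¹_{μ a}(x) · ∑_{ν,σ} η^{νσ} A²_{ν b}(x) A³_{σ c}(x). Then for all x, ∑_{a,b,c} d_{abc} ∑_{μ,ρ,ν,σ} η^{μρ} η^{νσ} A¹_{μ a}(x) ( A²_{ν b}(x) ∂_ρ A³_{σ c}(x) + A³_{ν b}(x) ∂_ρ A²_{σ c}(x) ) = ∑_{μ,ρ} η^{μρ} ∂_ρ Q_μ(x), i.e. the symmetric part of the cubic coupling is a total divergence. -/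

import Mathlib

/-- The Minkowski metric matrix `diag(1, -1, -1, -1)`. -/
def η (μ ν : Fin 4) : ℝ := if μ = ν then (if μ = 0 then 1 else -1) else 0

/-- Partial derivative in the `ρ`-th coordinate direction of `ℝ⁴`. -/
noncomputable def pd (ρ : Fin 4) (g : (Fin 4 → ℝ) → ℝ) (x : Fin 4 → ℝ) : ℝ :=
  fderiv ℝ g x (Pi.single ρ 1)

lemma pd_sum {ι : Type*} (s : Finset ι) (f : ι → (Fin 4 → ℝ) → ℝ) (ρ : Fin 4)
    (x : Fin 4 → ℝ) (hf : ∀ i ∈ s, DifferentiableAt ℝ (f i) x) :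
    pd ρ (fun y => ∑ i ∈ s, f i y) x = ∑ i ∈ s, pd ρ (f i) x := by
  unfold pd
  rw [fderiv_fun_sum hf]
  simp

lemma pd_mul (f g : (Fin 4 → ℝ) → ℝ) (ρ : Fin 4) (x : Fin 4 → ℝ)
    (hf : DifferentiableAt ℝ f x) (hg : DifferentiableAt ℝ g x) :
    pd ρ (fun y => f y * g y) x = pd ρ f x * g x + f x * pd ρ g x := by
  unfold pd
  rw [fderiv_fun_mul hf hg]
  simp
  ring

lemma pd_const_mul (c : ℝ) (f : (Fin 4 → ℝ) → ℝ) (ρ : Fin 4) (x : Fin 4 → ℝ)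
    (hf : DifferentiableAt ℝ f x) :
    pd ρ (fun y => c * f y) x = c * pd ρ f x := by
  unfold pd
  rw [fderiv_const_mul hf]
  simp

lemma η_comm (μ ν : Fin 4) : η μ ν = η ν μ := by
  unfold η
  rcases eq_or_ne μ ν with rfl | h
  · rfl
  · rw [if_neg h, if_neg (Ne.symm h)]

lemma etaswap (F : Fin 4 → Fin 4 → ℝ) :
    (∑ ν, ∑ σ, η ν σ * F ν σ) = ∑ ν, ∑ σ, η ν σ * F σ ν := by
  rw [Finset.sum_comm]
  exact Finset.sum_congr rfl fun ν _ => Finset.sum_congr rfl fun σ _ => by rw [η_comm]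

lemma comm_2_3 {n : ℕ} (f : Fin 4 → Fin 4 → Fin n → Fin n → Fin n → ℝ) :
    ∑ μ, ∑ ρ, ∑ a, ∑ b, ∑ c, f μ ρ a b c = ∑ a, ∑ b, ∑ c, ∑ μ, ∑ ρ, f μ ρ a b c := by
  simpa [Fintype.sum_prod_type] using
    Finset.sum_comm (s := (Finset.univ : Finset (Fin 4 × Fin 4)))
      (t := (Finset.univ : Finset (Fin n × Fin n × Fin n)))
      (f := fun p q => f p.1 p.2 q.1 q.2.1 q.2.2)

theorem symmetric_part_is_divergence
    (n : ℕ) (d : Fin n → Fin n → Fin n → ℝ)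
    (hd : ∀ a b c, d a b c = d a c b)
    (A1 A2 A3 : (Fin 4 → ℝ) → Fin n → Fin 4 → ℝ)
    (hA1 : ∀ a μ, ContDiff ℝ (⊤ : ℕ∞) fun x => A1 x a μ)
    (hA2 : ∀ a μ, ContDiff ℝ (⊤ : ℕ∞) fun x => A2 x a μ)
    (hA3 : ∀ a μ, ContDiff ℝ (⊤ : ℕ∞) fun x => A3 x a μ)
    (hdivfree : ∀ a x, ∑ μ, ∑ ρ, η μ ρ * pd ρ (fun y => A1 y a μ) x = 0) :
    ∀ x, ∑ a, ∑ b, ∑ c, d a b c *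
        ∑ μ, ∑ ρ, ∑ ν, ∑ σ, η μ ρ * η ν σ * A1 x a μ *
          (A2 x b ν * pd ρ (fun y => A3 y c σ) x
            + A3 x b ν * pd ρ (fun y => A2 y c σ) x)
      = ∑ μ, ∑ ρ, η μ ρ *
          pd ρ (fun y => ∑ a, ∑ b, ∑ c, d a b c * A1 y a μ *
            ∑ ν, ∑ σ, η ν σ * A2 y b ν * A3 y c σ) x := by
  intro x
  have dA1 : ∀ (a : Fin n) (μ : Fin 4), DifferentiableAt ℝ (fun y => A1 y a μ) x :=
    fun a μ => ((hA1 a μ).differentiable (by simp)).differentiableAt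
  have dA2 : ∀ (a : Fin n) (μ : Fin 4), DifferentiableAt ℝ (fun y => A2 y a μ) x :=
    fun a μ => ((hA2 a μ).differentiable (by simp)).differentiableAt
  have dA3 : ∀ (a : Fin n) (μ : Fin 4), DifferentiableAt ℝ (fun y => A3 y a μ) x :=
    fun a μ => ((hA3 a μ).differentiable (by simp)).differentiableAt
  have dS : ∀ (b c : Fin n),
      DifferentiableAt ℝ (fun y => ∑ ν, ∑ σ, η ν σ * A2 y b ν * A3 y c σ) x := by
    intro b c
    refine DifferentiableAt.fun_sum fun ν _ => DifferentiableAt.fun_sum fun σ _ => ?_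
    exact ((differentiableAt_const _).mul (dA2 b ν)).mul (dA3 c σ)
  -- derivative of the inner ν,σ sum
  have hpdS : ∀ (b c : Fin n) (ρ : Fin 4),
      pd ρ (fun y => ∑ ν, ∑ σ, η ν σ * A2 y b ν * A3 y c σ) x
        = ∑ ν, ∑ σ, η ν σ * (pd ρ (fun y => A2 y b ν) x * A3 x c σ
            + A2 x b ν * pd ρ (fun y => A3 y c σ) x) := by
    intro b c ρ
    rw [pd_sum]
    · refine Finset.sum_congr rfl fun ν _ => ?_
      rw [pd_sum]
      · refine Finset.sum_congr rfl fun σ _ => ?_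
        rw [pd_mul (fun y => η ν σ * A2 y b ν) (fun y => A3 y c σ) ρ x
            ((differentiableAt_const _).mul (dA2 b ν)) (dA3 c σ),
          pd_const_mul _ _ _ _ (dA2 b ν)]
        ring
      · exact fun σ _ => ((differentiableAt_const _).mul (dA2 b ν)).mul (dA3 c σ)
    · intro ν _
      exact DifferentiableAt.fun_sum fun σ _ =>
        ((differentiableAt_const _).mul (dA2 b ν)).mul (dA3 c σ)
  -- derivative of Q
  have hpdQ : ∀ (μ ρ : Fin 4),
      pd ρ (fun y => ∑ a, ∑ b, ∑ c, d a b c * A1 y a μ *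
          ∑ ν, ∑ σ, η ν σ * A2 y b ν * A3 y c σ) x
        = ∑ a, ∑ b, ∑ c,
            (d a b c * pd ρ (fun y => A1 y a μ) x *
                (∑ ν, ∑ σ, η ν σ * A2 x b ν * A3 x c σ)
              + d a b c * A1 x a μ *
                ∑ ν, ∑ σ, η ν σ * (pd ρ (fun y => A2 y b ν) x * A3 x c σ
                  + A2 x b ν * pd ρ (fun y => A3 y c σ) x)) := by
    intro μ ρ
    have dT : ∀ (a b c : Fin n), DifferentiableAt ℝ
        (fun y => d a b c * A1 y a μ * ∑ ν, ∑ σ, η ν σ * A2 y b ν * A3 y c σ) x :=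
      fun a b c => ((differentiableAt_const _).mul (dA1 a μ)).mul (dS b c)
    rw [pd_sum]
    · refine Finset.sum_congr rfl fun a _ => ?_
      rw [pd_sum]
      · refine Finset.sum_congr rfl fun b _ => ?_
        rw [pd_sum]
        · refine Finset.sum_congr rfl fun c _ => ?_
          rw [pd_mul (fun y => d a b c * A1 y a μ)
              (fun y => ∑ ν, ∑ σ, η ν σ * A2 y b ν * A3 y c σ) ρ x
              ((differentiableAt_const _).mul (dA1 a μ)) (dS b c),
            pd_const_mul _ _ _ _ (dA1 a μ), hpdS b c ρ]
        · exact fun c _ => dT a b c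
      · exact fun b _ => DifferentiableAt.fun_sum fun c _ => dT a b c
    · exact fun a _ => DifferentiableAt.fun_sum fun b _ =>
        DifferentiableAt.fun_sum fun c _ => dT a b c
  -- split the RHS
  have hR : (∑ μ, ∑ ρ, η μ ρ *
          pd ρ (fun y => ∑ a, ∑ b, ∑ c, d a b c * A1 y a μ *
            ∑ ν, ∑ σ, η ν σ * A2 y b ν * A3 y c σ) x)
      = (∑ μ, ∑ ρ, η μ ρ * ∑ a, ∑ b, ∑ c,
            d a b c * pd ρ (fun y => A1 y a μ) x *
              (∑ ν, ∑ σ, η ν σ * A2 x b ν * A3 x c σ))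
        + (∑ μ, ∑ ρ, η μ ρ * ∑ a, ∑ b, ∑ c,
            d a b c * A1 x a μ *
              ∑ ν, ∑ σ, η ν σ * (pd ρ (fun y => A2 y b ν) x * A3 x c σ
                + A2 x b ν * pd ρ (fun y => A3 y c σ) x)) := by
    simp only [hpdQ, Finset.sum_add_distrib, mul_add]
  -- the divergence-free part vanishes
  have hZ : (∑ μ, ∑ ρ, η μ ρ * ∑ a, ∑ b, ∑ c,
        d a b c * pd ρ (fun y => A1 y a μ) x *
          (∑ ν, ∑ σ, η ν σ * A2 x b ν * A3 x c σ)) = 0 := by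
    have e1 : ∀ μ ρ : Fin 4, η μ ρ * ∑ a, ∑ b, ∑ c,
          d a b c * pd ρ (fun y => A1 y a μ) x * (∑ ν, ∑ σ, η ν σ * A2 x b ν * A3 x c σ)
        = ∑ a, ∑ b, ∑ c, η μ ρ * (d a b c * pd ρ (fun y => A1 y a μ) x *
            (∑ ν, ∑ σ, η ν σ * A2 x b ν * A3 x c σ)) := by
      intro μ ρ
      rw [Finset.mul_sum]
      refine Finset.sum_congr rfl fun a _ => ?_
      rw [Finset.mul_sum]
      refine Finset.sum_congr rfl fun b _ => ?_
      rw [Finset.mul_sum]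
    simp only [e1]
    rw [comm_2_3]
    refine Finset.sum_eq_zero fun a _ => Finset.sum_eq_zero fun b _ =>
      Finset.sum_eq_zero fun c _ => ?_
    have e2 : (d a b c * (∑ ν, ∑ σ, η ν σ * A2 x b ν * A3 x c σ)) *
          (∑ μ, ∑ ρ, η μ ρ * pd ρ (fun y => A1 y a μ) x)
        = ∑ μ, ∑ ρ, η μ ρ * (d a b c * pd ρ (fun y => A1 y a μ) x *
            (∑ ν, ∑ σ, η ν σ * A2 x b ν * A3 x c σ)) := by
      rw [Finset.mul_sum]
      refine Finset.sum_congr rfl fun μ _ => ?_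
      rw [Finset.mul_sum]
      exact Finset.sum_congr rfl fun ρ _ => by ring
    rw [← e2, hdivfree a x, mul_zero]
  -- the other part equals the canonical form C
  have hW : (∑ μ, ∑ ρ, η μ ρ * ∑ a, ∑ b, ∑ c,
        d a b c * A1 x a μ *
          ∑ ν, ∑ σ, η ν σ * (pd ρ (fun y => A2 y b ν) x * A3 x c σ
            + A2 x b ν * pd ρ (fun y => A3 y c σ) x))
      = ∑ a, ∑ b, ∑ c, ∑ μ, ∑ ρ, ∑ ν, ∑ σ,
          η μ ρ * η ν σ * d a b c * A1 x a μ *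
            (pd ρ (fun y => A2 y b ν) x * A3 x c σ
              + A2 x b ν * pd ρ (fun y => A3 y c σ) x) := by
    simp only [Finset.mul_sum]
    rw [comm_2_3]
    refine Finset.sum_congr rfl fun a _ => Finset.sum_congr rfl fun b _ =>
      Finset.sum_congr rfl fun c _ => Finset.sum_congr rfl fun μ _ =>
      Finset.sum_congr rfl fun ρ _ => Finset.sum_congr rfl fun ν _ =>
      Finset.sum_congr rfl fun σ _ => by ring
  -- symmetry of d under exchange of the last two indices
  have dswap : ∀ (a : Fin n) (g : Fin n → Fin n → ℝ),
      ∑ b, ∑ c, d a b c * g b c = ∑ b, ∑ c, d a b c * g c b := by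
    intro a g
    rw [Finset.sum_comm]
    exact Finset.sum_congr rfl fun b _ => Finset.sum_congr rfl fun c _ => by rw [hd]
  -- split the LHS
  have hLsplit : (∑ a, ∑ b, ∑ c, d a b c *
        ∑ μ, ∑ ρ, ∑ ν, ∑ σ, η μ ρ * η ν σ * A1 x a μ *
          (A2 x b ν * pd ρ (fun y => A3 y c σ) x
            + A3 x b ν * pd ρ (fun y => A2 y c σ) x))
      = (∑ a, ∑ b, ∑ c, d a b c *
            ∑ μ, ∑ ρ, ∑ ν, ∑ σ, η μ ρ * η ν σ * A1 x a μ *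
              (A2 x b ν * pd ρ (fun y => A3 y c σ) x))
        + (∑ a, ∑ b, ∑ c, d a b c *
            ∑ μ, ∑ ρ, ∑ ν, ∑ σ, η μ ρ * η ν σ * A1 x a μ *
              (A3 x b ν * pd ρ (fun y => A2 y c σ) x)) := by
    simp only [mul_add, Finset.sum_add_distrib]
  -- split C
  have hCsplit : (∑ a, ∑ b, ∑ c, ∑ μ, ∑ ρ, ∑ ν, ∑ σ,
        η μ ρ * η ν σ * d a b c * A1 x a μ *
          (pd ρ (fun y => A2 y b ν) x * A3 x c σ
            + A2 x b ν * pd ρ (fun y => A3 y c σ) x))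
      = (∑ a, ∑ b, ∑ c, ∑ μ, ∑ ρ, ∑ ν, ∑ σ,
            η μ ρ * η ν σ * d a b c * A1 x a μ *
              (pd ρ (fun y => A2 y b ν) x * A3 x c σ))
        + (∑ a, ∑ b, ∑ c, ∑ μ, ∑ ρ, ∑ ν, ∑ σ,
            η μ ρ * η ν σ * d a b c * A1 x a μ *
              (A2 x b ν * pd ρ (fun y => A3 y c σ) x)) := by
    simp only [mul_add, Finset.sum_add_distrib]
  -- first summand of LHS equals second summand of C
  have hI : (∑ a, ∑ b, ∑ c, d a b c *
        ∑ μ, ∑ ρ, ∑ ν, ∑ σ, η μ ρ * η ν σ * A1 x a μ *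
          (A2 x b ν * pd ρ (fun y => A3 y c σ) x))
      = ∑ a, ∑ b, ∑ c, ∑ μ, ∑ ρ, ∑ ν, ∑ σ,
          η μ ρ * η ν σ * d a b c * A1 x a μ *
            (A2 x b ν * pd ρ (fun y => A3 y c σ) x) := by
    refine Finset.sum_congr rfl fun a _ => Finset.sum_congr rfl fun b _ =>
      Finset.sum_congr rfl fun c _ => ?_
    simp only [Finset.mul_sum]
    exact Finset.sum_congr rfl fun μ _ => Finset.sum_congr rfl fun ρ _ =>
      Finset.sum_congr rfl fun ν _ => Finset.sum_congr rfl fun σ _ => by ring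
  -- second summand of LHS equals first summand of C
  have hII : (∑ a, ∑ b, ∑ c, d a b c *
        ∑ μ, ∑ ρ, ∑ ν, ∑ σ, η μ ρ * η ν σ * A1 x a μ *
          (A3 x b ν * pd ρ (fun y => A2 y c σ) x))
      = ∑ a, ∑ b, ∑ c, ∑ μ, ∑ ρ, ∑ ν, ∑ σ,
          η μ ρ * η ν σ * d a b c * A1 x a μ *
            (pd ρ (fun y => A2 y b ν) x * A3 x c σ) := by
    refine Finset.sum_congr rfl fun a _ => ?_
    rw [dswap a]
    refine Finset.sum_congr rfl fun b _ => Finset.sum_congr rfl fun c _ => ?_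
    rw [Finset.mul_sum]
    refine Finset.sum_congr rfl fun μ _ => ?_
    rw [Finset.mul_sum]
    refine Finset.sum_congr rfl fun ρ _ => ?_
    have h1 : (d a b c * ∑ ν, ∑ σ, η μ ρ * η ν σ * A1 x a μ *
          (A3 x c ν * pd ρ (fun y => A2 y b σ) x))
        = ∑ ν, ∑ σ, η ν σ * (η μ ρ * d a b c * A1 x a μ * A3 x c ν *
            pd ρ (fun y => A2 y b σ) x) := by
      rw [Finset.mul_sum]
      refine Finset.sum_congr rfl fun ν _ => ?_
      rw [Finset.mul_sum]
      exact Finset.sum_congr rfl fun σ _ => by ring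
    rw [h1, etaswap]
    exact Finset.sum_congr rfl fun ν _ => Finset.sum_congr rfl fun σ _ => by ring
  rw [hR, hZ, hW, zero_add, hLsplit, hCsplit, hI, hII, add_comm]
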